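/- (Tate's key lemma) In Tate's setup, let Hom_B(B ⊗_A C, B) be viewed as a module over B ⊗_A C via (x·ψ)(y) = ψ(xy). If ψ ∈ J · Hom_B(B ⊗_A C, B), i.e. ψ is a sum of elements x·ψ′ with x ∈ J, then π(ψ(Δ)) = 0 in C. -/
import Mathlib


open scoped TensorProduct

/-- **Tate's key lemma.**
In Tate's setup, view `Hom_B(B ⊗_A C, B)` as a module over `B ⊗_A C` via
`(x·ψ)(y) = ψ(xy)`.  If `ψ ∈ J · Hom_B(B ⊗_A C, B)`, i.e. `ψ` is a finite sum
of elements `x·ψ'` with `x ∈ J`, then `π(ψ(Δ)) = 0` in `C`. -/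
theorem tate_key_lemma
    (A : Type*) [CommRing A] (B : Type*) [CommRing B] [Algebra A B]
    (n : ℕ) (f : Fin n → B)
    (hf : RingTheory.Sequence.IsRegular B (List.ofFn f))
    (I : Ideal B) (hI : I = Ideal.span (Set.range f))
    [Module.Finite A (B ⧸ I)] [Module.Free A (B ⧸ I)]
    (s : B ⊗[A] (B ⧸ I) →ₐ[A] (B ⧸ I))
    (hs : ∀ (b : B) (c : B ⧸ I), s (b ⊗ₜ c) = Ideal.Quotient.mk I b * c)
    (g : Fin n → B ⊗[A] (B ⧸ I))
    (hg : RingTheory.Sequence.IsRegular (B ⊗[A] (B ⧸ I)) (List.ofFn g))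
    (hJ : RingHom.ker s = Ideal.span (Set.range g))
    (h : Matrix (Fin n) (Fin n) (B ⊗[A] (B ⧸ I)))
    (hh : ∀ i, (f i) ⊗ₜ[A] (1 : B ⧸ I) = ∑ j, h i j * g j)
    -- `ψ ∈ J · Hom_B(B ⊗_A C, B)`
    (ψ : (B ⊗[A] (B ⧸ I)) →ₗ[B] B)
    (hψ : ∃ (m : ℕ) (x : Fin m → B ⊗[A] (B ⧸ I))
        (ψ' : Fin m → ((B ⊗[A] (B ⧸ I)) →ₗ[B] B)),
      (∀ i, x i ∈ RingHom.ker s) ∧ ∀ y, ψ y = ∑ i, ψ' i (x i * y)) :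
    Ideal.Quotient.mk I (ψ h.det) = 0 := by
  classical
  obtain ⟨m, x, ψ', hx, hsum⟩ := hψ
  have hT : (Ideal.span (Set.range fun i => (f i) ⊗ₜ[A] (1 : B ⧸ I)) : Ideal (B ⊗[A] (B ⧸ I))) = Ideal.span (Set.range fun i => (f i) ⊗ₜ[A] (1 : B ⧸ I)) := rfl
  -- Step 1: h.mulVec g = fun i => f i ⊗ₜ 1
  have hmv : h.mulVec g = fun i => (f i) ⊗ₜ[A] (1 : B ⧸ I) := by
    funext i
    simp only [Matrix.mulVec, dotProduct]
    exact (hh i).symm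
  -- Step 2: g j * h.det ∈ Ideal.span (Set.range fun i => (f i) ⊗ₜ[A] (1 : B ⧸ I))
  have hdet : ∀ j, g j * h.det ∈ Ideal.span (Set.range fun i => (f i) ⊗ₜ[A] (1 : B ⧸ I)) := by
    intro j
    have h1 : h.adjugate.mulVec (h.mulVec g) = h.det • g := by
      rw [Matrix.mulVec_mulVec, Matrix.adjugate_mul]
      ext k
      simp [Matrix.mulVec, dotProduct, Matrix.one_apply, mul_comm]
    rw [hmv] at h1
    have h2 : g j * h.det = ∑ i, h.adjugate j i * ((f i) ⊗ₜ[A] (1 : B ⧸ I)) := by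
      have := congrFun h1 j
      simp only [Matrix.mulVec, dotProduct, Pi.smul_apply, smul_eq_mul] at this
      rw [mul_comm, ← this]
    rw [h2]
    exact Ideal.sum_mem _ fun i _ =>
      Ideal.mul_mem_left _ _ (Ideal.subset_span ⟨i, rfl⟩)
  -- Step 3: z ∈ span(range g) → z * h.det ∈ Ideal.span (Set.range fun i => (f i) ⊗ₜ[A] (1 : B ⧸ I))
  have hmul : ∀ z ∈ Ideal.span (Set.range g), z * h.det ∈ Ideal.span (Set.range fun i => (f i) ⊗ₜ[A] (1 : B ⧸ I)) := by
    intro z hz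
    have : Ideal.span (Set.range g) ≤
        Submodule.comap (LinearMap.mulRight (B ⊗[A] (B ⧸ I)) h.det) (Ideal.span (Set.range fun i => (f i) ⊗ₜ[A] (1 : B ⧸ I))) := by
      rw [Ideal.span_le]
      rintro _ ⟨j, rfl⟩
      exact hdet j
    exact this hz
  -- Step 4: any B-linear map sends T into I
  have hphi : ∀ (φ : (B ⊗[A] (B ⧸ I)) →ₗ[B] B), ∀ w ∈ Ideal.span (Set.range fun i => (f i) ⊗ₜ[A] (1 : B ⧸ I)), φ w ∈ I := by
    intro φ w hw
    rw [Ideal.mem_span_range_iff_exists_fun] at hw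
    obtain ⟨c, hc⟩ := hw
    have key : ∀ (b : B) (y : B ⊗[A] (B ⧸ I)), b • y = (b ⊗ₜ[A] (1 : B ⧸ I)) * y := by
      intro b y
      induction y using TensorProduct.induction_on with
      | zero => simp
      | tmul p q =>
          rw [Algebra.TensorProduct.tmul_mul_tmul, one_mul, TensorProduct.smul_tmul',
            smul_eq_mul]
      | add u v hu hv => rw [smul_add, mul_add, hu, hv]
    have hc' : w = ∑ i, f i • c i := by
      rw [← hc]
      refine Finset.sum_congr rfl fun i _ => ?_
      rw [key, mul_comm]
    have hfI : ∀ i, f i ∈ I := by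
      intro i; rw [hI]; exact Ideal.subset_span ⟨i, rfl⟩
    rw [hc', map_sum]
    refine Ideal.sum_mem _ fun i _ => ?_
    rw [map_smul, smul_eq_mul]
    exact Ideal.mul_mem_right _ _ (hfI i)
  -- Conclude
  rw [Ideal.Quotient.eq_zero_iff_mem, hsum]
  refine Ideal.sum_mem _ fun i _ => ?_
  exact hphi (ψ' i) _ (hmul (x i) (by rw [← hJ]; exact hx i))
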